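/- Fix reals b, σ with σ ≠ 0, d > 0 and T ≥ 2d, and assume 1 − d·(b/σ)² > 0. Then the first-slice integral system with τ = d, i.e. posed on the full slice [T−2d, T−d] × [−d, 0]², admits a unique continuous solution ξ = (ξ₁, ξ₂, ξ₃), and this solution satisfies 0 < 1 − d·(b/σ)² ≤ ξ₁(t) ≤ 1 for every t ∈ [T−2d, T−d]. -/

import Mathlib

open Set MeasureTheory

/-- The first-slice integral system on the full slice `[T-2d, T-d] × [-d,0]²`. -/
def isSolutionSlice (b σ T d : ℝ) (ξ₁ : ℝ → ℝ) (ξ₂ : ℝ → ℝ → ℝ) (ξ₃ : ℝ → ℝ → ℝ → ℝ) : Prop :=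
  ∀ t ∈ Icc (T - 2 * d) (T - d), ∀ s ∈ Icc (-d) 0, ∀ r ∈ Icc (-d) 0,
    ξ₁ t = 1 - (σ ^ 2)⁻¹ * ∫ x in t..(T - d), (ξ₂ x 0) ^ 2 ∧
    ξ₂ t s = b * ξ₁ (min (T - d) (t + s + d)) -
      (σ ^ 2)⁻¹ * ∫ x in t..(min (T - d) (t + s + d)), ξ₂ x 0 * ξ₃ x (t + s - x) 0 ∧
    ξ₃ t s r = b * ξ₂ (min (T - d) (t + min s r + d)) (|s - r| - d) -
      (σ ^ 2)⁻¹ * ∫ x in t..(min (T - d) (t + min s r + d)),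
        ξ₃ x (t + s - x) 0 * ξ₃ x 0 (t + r - x)

/-- Continuity of a triple on the full slice `[T-2d, T-d] × [-d,0]²`. -/
def isContTriple (T d : ℝ) (ξ₁ : ℝ → ℝ) (ξ₂ : ℝ → ℝ → ℝ) (ξ₃ : ℝ → ℝ → ℝ → ℝ) : Prop :=
  ContinuousOn ξ₁ (Icc (T - 2 * d) (T - d)) ∧
  ContinuousOn (fun p : ℝ × ℝ => ξ₂ p.1 p.2) (Icc (T - 2 * d) (T - d) ×ˢ Icc (-d) 0) ∧
  ContinuousOn (fun p : ℝ × ℝ × ℝ => ξ₃ p.1 p.2.1 p.2.2)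
    (Icc (T - 2 * d) (T - d) ×ˢ Icc (-d) 0 ×ˢ Icc (-d) 0)



lemma integral_pow_sub (t m c : ℝ) (n : ℕ) :
    ∫ x in t..m, (c - x) ^ n
      = ((c - t) ^ (n + 1) - (c - m) ^ (n + 1)) / (n + 1) := by
  have key : ∀ x : ℝ, HasDerivAt (fun y : ℝ => -((c - y) ^ (n + 1)) / (n + 1))
      ((c - x) ^ n) x := by
    intro x
    have h1 : HasDerivAt (fun y : ℝ => c - y) (-1) x := by
      simpa using (hasDerivAt_id x).const_sub c
    have h2 := h1.pow (n + 1)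
    have h3 := (h2.neg).div_const ((n : ℝ) + 1)
    have hne : (n : ℝ) + 1 ≠ 0 := by positivity
    refine h3.congr_deriv ?_
    push_cast
    field_simp
  have hint : IntervalIntegrable (fun x : ℝ => (c - x) ^ n) volume t m :=
    (Continuous.intervalIntegrable (by continuity) t m)
  rw [intervalIntegral.integral_eq_sub_of_hasDerivAt (fun x _ => key x) hint]
  ring

lemma int_abs_le (f : ℝ → ℝ) (t m c K : ℝ) (n : ℕ) (htm : t ≤ m) (hm : m ≤ c)
    (hf : ContinuousOn f (Icc t m)) (hK : 0 ≤ K)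
    (hb : ∀ x ∈ Icc t m, |f x| ≤ K * (c - x) ^ n) :
    |∫ x in t..m, f x| ≤ K * (c - t) ^ (n + 1) / (n + 1) := by
  have hfint : IntervalIntegrable f volume t m := by
    apply ContinuousOn.intervalIntegrable
    rwa [uIcc_of_le htm]
  have h1 : |∫ x in t..m, f x| ≤ ∫ x in t..m, |f x| :=
    intervalIntegral.abs_integral_le_integral_abs htm
  have h2 : (∫ x in t..m, |f x|) ≤ ∫ x in t..m, K * (c - x) ^ n := by
    apply intervalIntegral.integral_mono_on htm hfint.abs
    · exact (Continuous.intervalIntegrable (by continuity) t m)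
    · exact hb
  have h3 : (∫ x in t..m, K * (c - x) ^ n)
      = K * (((c - t) ^ (n + 1) - (c - m) ^ (n + 1)) / (n + 1)) := by
    rw [intervalIntegral.integral_const_mul, integral_pow_sub]
  have h4 : K * (((c - t) ^ (n + 1) - (c - m) ^ (n + 1)) / (n + 1))
      ≤ K * (c - t) ^ (n + 1) / (n + 1) := by
    have hnn : (0:ℝ) ≤ (c - m) ^ (n + 1) := pow_nonneg (by linarith) (n + 1)
    rw [mul_div_assoc]
    gcongr
    linarith
  linarith

namespace Stmt6Aux


noncomputable def F (b σ d T : ℝ) (t : ℝ) : ℝ := (1 + (b / σ) ^ 2 * (T - d - t))⁻¹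

variable {b σ d T : ℝ}

lemma den_pos {t : ℝ} (ht : t ≤ T - d) : 0 < 1 + (b / σ) ^ 2 * (T - d - t) := by
  nlinarith [sq_nonneg (b / σ)]

lemma F_hasDeriv {t : ℝ} (ht : t ≤ T - d) :
    HasDerivAt (F b σ d T) ((b / σ) ^ 2 * (F b σ d T t) ^ 2) t := by
  have h0 := den_pos (b := b) (σ := σ) ht
  have h1 : HasDerivAt (fun x : ℝ => 1 + (b / σ) ^ 2 * (T - d - x)) (-(b / σ) ^ 2) t := by
    have : HasDerivAt (fun x : ℝ => T - d - x) (-1) t := by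
      simpa using (hasDerivAt_id t).const_sub (T - d)
    simpa using (this.const_mul ((b / σ) ^ 2)).const_add 1
  have h2 := h1.inv (ne_of_gt h0)
  refine h2.congr_deriv ?_
  unfold F
  field_simp

lemma F_cont : ContinuousOn (F b σ d T) (Iic (T - d)) := fun x hx =>
  (F_hasDeriv hx).continuousAt.continuousWithinAt

lemma F_int {t u : ℝ} (ht : t ≤ T - d) (hu : u ≤ T - d) :
    ∫ x in t..u, (b / σ) ^ 2 * (F b σ d T x) ^ 2 = F b σ d T u - F b σ d T t := by
  apply intervalIntegral.integral_eq_sub_of_hasDerivAt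
  · intro x hx
    exact F_hasDeriv (le_trans hx.2 (max_le ht hu))
  · apply ContinuousOn.intervalIntegrable
    have hsub : uIcc t u ⊆ Iic (T - d) := fun x hx => le_trans hx.2 (max_le ht hu)
    exact continuousOn_const.mul ((F_cont.mono hsub).pow 2)

lemma F_sq_int (hσ : σ ≠ 0) {t u : ℝ} (ht : t ≤ T - d) (hu : u ≤ T - d) :
    b ^ 2 * ∫ x in t..u, (F b σ d T x) ^ 2 = σ ^ 2 * (F b σ d T u - F b σ d T t) := by
  have h := F_int (b := b) (σ := σ) ht hu
  rw [intervalIntegral.integral_const_mul] at h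
  have hσ2 : σ ^ 2 ≠ 0 := pow_ne_zero _ hσ
  rw [div_pow] at h
  field_simp at h ⊢
  linarith

lemma F_at_end : F b σ d T (T - d) = 1 := by simp [F]

lemma eq1F (hσ : σ ≠ 0) {t : ℝ} (ht : t ≤ T - d) :
    F b σ d T t = 1 - (σ ^ 2)⁻¹ * ∫ x in t..(T - d), (b * F b σ d T x) ^ 2 := by
  have h : ∫ x in t..(T - d), (b * F b σ d T x) ^ 2
      = b ^ 2 * ∫ x in t..(T - d), (F b σ d T x) ^ 2 := by
    rw [← intervalIntegral.integral_const_mul]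
    congr 1; ext x; ring
  rw [h, F_sq_int hσ ht le_rfl, F_at_end]
  have hσ2 : σ ^ 2 ≠ 0 := pow_ne_zero _ hσ
  field_simp
  ring

lemma eq2F (hσ : σ ≠ 0) {t u : ℝ} (ht : t ≤ T - d) (hu : u ≤ T - d) :
    b * F b σ d T t = b * F b σ d T u -
      (σ ^ 2)⁻¹ * ∫ x in t..u, (b * F b σ d T x) * (b ^ 2 * F b σ d T x) := by
  have h : ∫ x in t..u, (b * F b σ d T x) * (b ^ 2 * F b σ d T x)
      = b * (b ^ 2 * ∫ x in t..u, (F b σ d T x) ^ 2) := by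
    rw [← intervalIntegral.integral_const_mul, ← intervalIntegral.integral_const_mul]
    exact intervalIntegral.integral_congr fun x _ => by ring
  rw [h, F_sq_int hσ ht hu]
  have hσ2 : σ ^ 2 ≠ 0 := pow_ne_zero _ hσ
  field_simp
  ring

lemma eq3F (hσ : σ ≠ 0) {t u : ℝ} (ht : t ≤ T - d) (hu : u ≤ T - d) :
    b ^ 2 * F b σ d T t = b * (b * F b σ d T u) -
      (σ ^ 2)⁻¹ * ∫ x in t..u, (b ^ 2 * F b σ d T x) * (b ^ 2 * F b σ d T x) := by
  have h : ∫ x in t..u, (b ^ 2 * F b σ d T x) * (b ^ 2 * F b σ d T x)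
      = b ^ 2 * (b ^ 2 * ∫ x in t..u, (F b σ d T x) ^ 2) := by
    rw [← intervalIntegral.integral_const_mul, ← intervalIntegral.integral_const_mul]
    exact intervalIntegral.integral_congr fun x _ => by ring
  rw [h, F_sq_int hσ ht hu]
  have hσ2 : σ ^ 2 ≠ 0 := pow_ne_zero _ hσ
  field_simp
  ring


lemma F_bounds {t : ℝ} (ht : T - 2*d ≤ t) (htT : t ≤ T - d) :
    0 < F b σ d T t ∧ F b σ d T t ≤ 1 := by
  have h0 := den_pos (b := b) (σ := σ) htT
  constructor
  · exact inv_pos.2 h0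
  · have h1 : 1 ≤ 1 + (b/σ)^2 * (T - d - t) := by nlinarith [sq_nonneg (b/σ)]
    calc (1 + (b/σ)^2 * (T - d - t))⁻¹ ≤ 1⁻¹ := by
          apply inv_anti₀ one_pos h1
      _ = 1 := by norm_num

set_option maxHeartbeats 4000000 in
lemma uniq (hσ : σ ≠ 0) (hd : 0 < d) (hT : 2 * d ≤ T)
    (g₁ : ℝ → ℝ) (g₂ : ℝ → ℝ → ℝ) (g₃ : ℝ → ℝ → ℝ → ℝ)
    (hct : isContTriple T d g₁ g₂ g₃) (hsol : isSolutionSlice b σ T d g₁ g₂ g₃) :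
    (∀ t ∈ Icc (T - 2*d) (T - d), g₁ t = F b σ d T t) ∧
    (∀ t ∈ Icc (T - 2*d) (T - d), ∀ s ∈ Icc (-d) 0, g₂ t s = b * F b σ d T t) ∧
    (∀ t ∈ Icc (T - 2*d) (T - d), ∀ s ∈ Icc (-d) 0, ∀ r ∈ Icc (-d) 0,
      g₃ t s r = b ^ 2 * F b σ d T t) := by
  have hσ2 : (0:ℝ) < σ ^ 2 := by positivity
  set I : Set ℝ := Icc (T - 2*d) (T - d) with hIdef
  set J : Set ℝ := Icc (-d) 0 with hJdef
  set FF : ℝ → ℝ := F b σ d T with hFFdef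
  have hIic : I ⊆ Iic (T - d) := fun x hx => hx.2
  have h0J : (0:ℝ) ∈ J := ⟨by linarith, le_refl 0⟩
  have hdJ : (-d) ∈ J := ⟨le_refl _, by linarith⟩
  have hFc : ContinuousOn FF (Iic (T - d)) := F_cont
  have hFb : ∀ x ∈ I, 0 < FF x ∧ FF x ≤ 1 := fun x hx => F_bounds hx.1 hx.2
  -- continuity helpers
  have cg2 : ∀ (φ : ℝ → ℝ), Continuous φ → ∀ t m : ℝ, Icc t m ⊆ I →
      (∀ x ∈ Icc t m, φ x ∈ J) → ContinuousOn (fun x => g₂ x (φ x)) (Icc t m) := by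
    intro φ hφ t m hsub hmem
    exact hct.2.1.comp ((continuous_id.prodMk hφ).continuousOn)
      (fun x hx => Set.mk_mem_prod (hsub hx) (hmem x hx))
  have cg3 : ∀ (φ ψ : ℝ → ℝ), Continuous φ → Continuous ψ → ∀ t m : ℝ, Icc t m ⊆ I →
      (∀ x ∈ Icc t m, φ x ∈ J) → (∀ x ∈ Icc t m, ψ x ∈ J) →
      ContinuousOn (fun x => g₃ x (φ x) (ψ x)) (Icc t m) := by
    intro φ ψ hφ hψ t m hsub hφm hψm
    exact hct.2.2.comp ((continuous_id.prodMk (hφ.prodMk hψ)).continuousOn)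
      (fun x hx => Set.mk_mem_prod (hsub hx) (Set.mk_mem_prod (hφm x hx) (hψm x hx)))
  have cF : ∀ t m : ℝ, m ≤ T - d → ContinuousOn FF (Icc t m) :=
    fun t m hm => hFc.mono (fun x hx => le_trans hx.2 hm)
  -- bounds A on functions
  obtain ⟨A₂, hA₂⟩ := (isCompact_Icc.prod isCompact_Icc).exists_bound_of_continuousOn hct.2.1
  obtain ⟨A₃, hA₃⟩ :=
    (isCompact_Icc.prod (isCompact_Icc.prod isCompact_Icc)).exists_bound_of_continuousOn hct.2.2
  set A : ℝ := |b| + b^2 + max A₂ 0 + max A₃ 0 with hAdef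
  have hA0 : 0 ≤ A := by
    have := abs_nonneg b; have := sq_nonneg b
    have := le_max_right A₂ (0:ℝ); have := le_max_right A₃ (0:ℝ)
    simp only [hAdef]; nlinarith
  have hAg2 : ∀ x ∈ I, ∀ y ∈ J, |g₂ x y| ≤ A := by
    intro x hx y hy
    have h := hA₂ (x, y) (Set.mk_mem_prod hx hy)
    rw [Real.norm_eq_abs] at h
    have := le_max_left A₂ (0:ℝ); have := le_max_right A₃ (0:ℝ)
    have := abs_nonneg b; have := sq_nonneg b
    simp only [hAdef]; nlinarith
  have hAg3 : ∀ x ∈ I, ∀ y ∈ J, ∀ z ∈ J, |g₃ x y z| ≤ A := by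
    intro x hx y hy z hz
    have h := hA₃ (x, y, z) (Set.mk_mem_prod hx (Set.mk_mem_prod hy hz))
    rw [Real.norm_eq_abs] at h
    have := le_max_left A₃ (0:ℝ); have := le_max_right A₂ (0:ℝ)
    have := abs_nonneg b; have := sq_nonneg b
    simp only [hAdef]; nlinarith
  have hFabs : ∀ x ∈ I, |FF x| ≤ 1 := by
    intro x hx
    rw [abs_of_pos (hFb x hx).1]; exact (hFb x hx).2
  have hAf2 : ∀ x ∈ I, |b * FF x| ≤ A := by
    intro x hx
    rw [abs_mul]
    have h1 : |b| * |FF x| ≤ |b| * 1 :=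
      mul_le_mul_of_nonneg_left (hFabs x hx) (abs_nonneg b)
    have := le_max_right A₂ (0:ℝ); have := le_max_right A₃ (0:ℝ)
    have := sq_nonneg b
    simp only [hAdef]; nlinarith
  have hAf3 : ∀ x ∈ I, |b^2 * FF x| ≤ A := by
    intro x hx
    rw [abs_mul, abs_of_nonneg (sq_nonneg b)]
    have h1 : b^2 * |FF x| ≤ b^2 * 1 :=
      mul_le_mul_of_nonneg_left (hFabs x hx) (sq_nonneg b)
    have := le_max_right A₂ (0:ℝ); have := le_max_right A₃ (0:ℝ)
    have := abs_nonneg b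
    simp only [hAdef]; nlinarith
  -- bounds B on differences
  have hD1c : ContinuousOn (fun t => g₁ t - FF t) I := hct.1.sub (hFc.mono hIic)
  have hD2c : ContinuousOn (fun p : ℝ × ℝ => g₂ p.1 p.2 - b * FF p.1) (I ×ˢ J) :=
    hct.2.1.sub (continuousOn_const.mul
      ((hFc.mono hIic).comp continuous_fst.continuousOn (fun p hp => hp.1)))
  have hD3c : ContinuousOn (fun p : ℝ × ℝ × ℝ => g₃ p.1 p.2.1 p.2.2 - b^2 * FF p.1)
      (I ×ˢ J ×ˢ J) :=
    hct.2.2.sub (continuousOn_const.mul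
      ((hFc.mono hIic).comp continuous_fst.continuousOn (fun p hp => hp.1)))
  obtain ⟨B₁, hB₁⟩ := isCompact_Icc.exists_bound_of_continuousOn hD1c
  obtain ⟨B₂, hB₂⟩ := (isCompact_Icc.prod isCompact_Icc).exists_bound_of_continuousOn hD2c
  obtain ⟨B₃, hB₃⟩ :=
    (isCompact_Icc.prod (isCompact_Icc.prod isCompact_Icc)).exists_bound_of_continuousOn hD3c
  set B : ℝ := max B₁ 0 + max B₂ 0 + max B₃ 0 with hBdef
  have hB0 : 0 ≤ B := by
    have := le_max_right B₁ (0:ℝ); have := le_max_right B₂ (0:ℝ)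
    have := le_max_right B₃ (0:ℝ)
    simp only [hBdef]; linarith
  have hBg1 : ∀ t ∈ I, |g₁ t - FF t| ≤ B := by
    intro t ht
    have h := hB₁ t ht; rw [Real.norm_eq_abs] at h
    have := le_max_left B₁ (0:ℝ); have := le_max_right B₂ (0:ℝ)
    have := le_max_right B₃ (0:ℝ)
    simp only [hBdef]; linarith
  have hBg2 : ∀ t ∈ I, ∀ s ∈ J, |g₂ t s - b * FF t| ≤ B := by
    intro t ht s hs
    have h := hB₂ (t, s) (Set.mk_mem_prod ht hs); rw [Real.norm_eq_abs] at h
    have := le_max_left B₂ (0:ℝ); have := le_max_right B₁ (0:ℝ)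
    have := le_max_right B₃ (0:ℝ)
    simp only [hBdef]; linarith
  have hBg3 : ∀ t ∈ I, ∀ s ∈ J, ∀ r ∈ J, |g₃ t s r - b^2 * FF t| ≤ B := by
    intro t ht s hs r hr
    have h := hB₃ (t, s, r) (Set.mk_mem_prod ht (Set.mk_mem_prod hs hr))
    rw [Real.norm_eq_abs] at h
    have := le_max_left B₃ (0:ℝ); have := le_max_right B₁ (0:ℝ)
    have := le_max_right B₂ (0:ℝ)
    simp only [hBdef]; linarith
  set lam : ℝ := |b| + 1 with hlamdef
  have hlam1 : 1 ≤ lam := by simp only [hlamdef]; linarith [abs_nonneg b]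
  have hlam0 : 0 < lam := by linarith
  set C : ℝ := 1 + 2*A*lam^2/σ^2 with hCdef
  have hCσ : 2*A*lam^2/σ^2 ≤ C := by
    simp only [hCdef]; linarith
  have hC1 : 1 ≤ C := by
    have : 0 ≤ 2*A*lam^2/σ^2 := by positivity
    simp only [hCdef]; linarith
  have hC0 : 0 ≤ C := by linarith
  clear_value A B lam C
  -- main induction
  have main : ∀ n : ℕ,
      (∀ t ∈ I, |g₁ t - FF t| ≤ B * C ^ n * (T - d - t) ^ n / (Nat.factorial n : ℝ)) ∧
      (∀ t ∈ I, ∀ s ∈ J, |g₂ t s - b * FF t|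
        ≤ lam * (B * C ^ n * (T - d - t) ^ n / (Nat.factorial n : ℝ))) ∧
      (∀ t ∈ I, ∀ s ∈ J, ∀ r ∈ J, |g₃ t s r - b ^ 2 * FF t|
        ≤ lam ^ 2 * (B * C ^ n * (T - d - t) ^ n / (Nat.factorial n : ℝ))) := by
    intro n
    induction n with
    | zero =>
      refine ⟨fun t ht => ?_, fun t ht s hs => ?_, fun t ht s hs r hr => ?_⟩
      · simpa using hBg1 t ht
      · have h := hBg2 t ht s hs
        have : B ≤ lam * B := le_mul_of_one_le_left hB0 hlam1
        simp only [pow_zero, Nat.factorial_zero, Nat.cast_one, mul_one, div_one]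
        linarith
      · have h := hBg3 t ht s hs r hr
        have hl2 : 1 ≤ lam ^ 2 := one_le_pow₀ hlam1
        have : B ≤ lam ^ 2 * B := le_mul_of_one_le_left hB0 hl2
        simp only [pow_zero, Nat.factorial_zero, Nat.cast_one, mul_one, div_one]
        linarith
    | succ n ih =>
      obtain ⟨ih1, ih2, ih3⟩ := ih
      have hfp : (0:ℝ) < (Nat.factorial n : ℝ) := by exact_mod_cast Nat.factorial_pos n
      have hn1 : (0:ℝ) < (n:ℝ) + 1 := by positivity
      have keyIneq : ∀ X : ℝ, 0 ≤ X →
          (σ^2)⁻¹ * (2*A*lam^2*B*C^n/(Nat.factorial n : ℝ) * X / ((n:ℝ)+1))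
            ≤ B * C^(n+1) * X / (Nat.factorial (n+1) : ℝ) := by
        intro X hX
        have hfac : (Nat.factorial (n+1) : ℝ) = ((n:ℝ)+1) * (Nat.factorial n : ℝ) := by
          rw [Nat.factorial_succ]; push_cast; ring
        rw [hfac]
        have e1 : (σ^2)⁻¹ * (2*A*lam^2*B*C^n/(Nat.factorial n : ℝ) * X / ((n:ℝ)+1))
            = (2*A*lam^2/σ^2) * (B*C^n*X/(((n:ℝ)+1)*(Nat.factorial n : ℝ))) := by
          field_simp
        have e2 : B*C^(n+1)*X/(((n:ℝ)+1)*(Nat.factorial n:ℝ))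
            = C * (B*C^n*X/(((n:ℝ)+1)*(Nat.factorial n:ℝ))) := by ring
        rw [e1, e2]
        exact mul_le_mul_of_nonneg_right hCσ
          (div_nonneg (mul_nonneg (mul_nonneg hB0 (pow_nonneg hC0 n)) hX) (by positivity))
      have hK0 : 0 ≤ 2*A*lam^2*B*C^n/(Nat.factorial n : ℝ) :=
        div_nonneg (mul_nonneg (mul_nonneg (mul_nonneg
          (mul_nonneg (by norm_num : (0:ℝ) ≤ 2) hA0) (sq_nonneg lam)) hB0)
          (pow_nonneg hC0 n)) hfp.le
      -- step for the first component
      have h1 : ∀ t ∈ I, |g₁ t - FF t|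
          ≤ B * C ^ (n+1) * (T - d - t) ^ (n+1) / (Nat.factorial (n+1) : ℝ) := by
        intro t ht
        have htT : t ≤ T - d := ht.2
        have hsub : Icc t (T - d) ⊆ I := fun x hx => ⟨le_trans ht.1 hx.1, hx.2⟩
        have hcg : ContinuousOn (fun x => g₂ x 0) (Icc t (T - d)) :=
          cg2 (fun _ => 0) continuous_const t (T - d) hsub (fun x _ => h0J)
        have hcF : ContinuousOn FF (Icc t (T - d)) := cF t (T - d) le_rfl
        have hi1 : IntervalIntegrable (fun x => (g₂ x 0) ^ 2) volume t (T - d) := by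
          apply ContinuousOn.intervalIntegrable
          rw [uIcc_of_le htT]; exact hcg.pow 2
        have hi2 : IntervalIntegrable (fun x => (b * FF x) ^ 2) volume t (T - d) := by
          apply ContinuousOn.intervalIntegrable
          rw [uIcc_of_le htT]; exact (continuousOn_const.mul hcF).pow 2
        have e1g := (hsol t ht (-d) hdJ (-d) hdJ).1
        have e1f := eq1F (b := b) (d := d) (T := T) hσ htT
        rw [← hFFdef] at e1f
        have d1eq : g₁ t - FF t
            = (σ^2)⁻¹ * ∫ x in t..(T-d), ((b * FF x) ^ 2 - (g₂ x 0) ^ 2) := by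
          rw [intervalIntegral.integral_sub hi2 hi1, e1g, e1f]
          ring
        rw [d1eq, abs_mul, abs_of_nonneg (by positivity : (0:ℝ) ≤ (σ^2)⁻¹)]
        have hb : ∀ x ∈ Icc t (T - d),
            |(b * FF x) ^ 2 - (g₂ x 0) ^ 2|
              ≤ 2*A*lam^2*B*C^n/(Nat.factorial n : ℝ) * (T - d - x) ^ n := by
          intro x hx
          have hxI := hsub hx
          have hM0 : 0 ≤ B*C^n*(T-d-x)^n/(Nat.factorial n : ℝ) :=
            div_nonneg (mul_nonneg (mul_nonneg hB0 (pow_nonneg hC0 n))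
              (pow_nonneg (by linarith [hx.2] : (0:ℝ) ≤ T - d - x) n)) hfp.le
          have e1 := ih2 x hxI 0 h0J
          have e3 : |g₂ x 0 + b * FF x| ≤ 2*A := by
            calc |g₂ x 0 + b * FF x| ≤ |g₂ x 0| + |b * FF x| := abs_add_le _ _
              _ ≤ A + A := add_le_add (hAg2 x hxI 0 h0J) (hAf2 x hxI)
              _ = 2*A := by ring
          have heq : (b * FF x) ^ 2 - (g₂ x 0) ^ 2
              = -((g₂ x 0 - b * FF x) * (g₂ x 0 + b * FF x)) := by ring
          rw [heq, abs_neg, abs_mul]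
          calc |g₂ x 0 - b * FF x| * |g₂ x 0 + b * FF x|
              ≤ (lam * (B*C^n*(T-d-x)^n/(Nat.factorial n : ℝ))) * (2*A) :=
                mul_le_mul e1 e3 (abs_nonneg _) (mul_nonneg hlam0.le hM0)
            _ ≤ 2*A*lam^2*B*C^n/(Nat.factorial n : ℝ) * (T - d - x) ^ n := by
                have hfact := mul_nonneg (mul_nonneg hA0 hM0)
                  (mul_nonneg hlam0.le (by linarith : (0:ℝ) ≤ lam - 1))
                have e5 : 2*A*lam^2*B*C^n/(Nat.factorial n : ℝ) * (T - d - x) ^ n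
                    = lam * (B*C^n*(T-d-x)^n/(Nat.factorial n : ℝ)) * (2*A)
                      + 2*(A * (B * C ^ n * (T - d - x) ^ n / (Nat.factorial n : ℝ))
                        * (lam * (lam - 1))) := by ring
                linarith [hfact]
        have hK0 : 0 ≤ 2*A*lam^2*B*C^n/(Nat.factorial n : ℝ) :=
          div_nonneg (mul_nonneg (mul_nonneg (mul_nonneg
            (mul_nonneg (by norm_num : (0:ℝ) ≤ 2) hA0) (sq_nonneg lam)) hB0)
            (pow_nonneg hC0 n)) hfp.le
        have habs := int_abs_le (fun x => (b * FF x) ^ 2 - (g₂ x 0) ^ 2) t (T-d) (T-d)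
          (2*A*lam^2*B*C^n/(Nat.factorial n : ℝ)) n htT le_rfl
          (((continuousOn_const.mul hcF).pow 2).sub (hcg.pow 2)) hK0 hb
        calc (σ^2)⁻¹ * |∫ x in t..(T-d), ((b * FF x) ^ 2 - (g₂ x 0) ^ 2)|
            ≤ (σ^2)⁻¹ * (2*A*lam^2*B*C^n/(Nat.factorial n : ℝ) * (T-d-t)^(n+1) / ((n:ℝ)+1)) := by
              apply mul_le_mul_of_nonneg_left _ (by positivity)
              convert habs using 2
          _ ≤ B * C ^ (n+1) * (T - d - t) ^ (n+1) / (Nat.factorial (n+1) : ℝ) :=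
              keyIneq _ (pow_nonneg (by linarith : (0:ℝ) ≤ T - d - t) _)
      -- step for the second component
      have h2 : ∀ t ∈ I, ∀ s ∈ J, |g₂ t s - b * FF t|
          ≤ lam * (B * C ^ (n+1) * (T - d - t) ^ (n+1) / (Nat.factorial (n+1) : ℝ)) := by
        intro t ht s hs
        have htT : t ≤ T - d := ht.2
        have htm : t ≤ min (T-d) (t+s+d) := le_min htT (by linarith [hs.1])
        have hmT : min (T-d) (t+s+d) ≤ T - d := min_le_left _ _
        have hmI : min (T-d) (t+s+d) ∈ I := ⟨le_trans ht.1 htm, hmT⟩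
        have hsub : Icc t (min (T-d) (t+s+d)) ⊆ I :=
          fun x hx => ⟨le_trans ht.1 hx.1, le_trans hx.2 hmT⟩
        have hmem3 : ∀ x ∈ Icc t (min (T-d) (t+s+d)), t + s - x ∈ J := by
          intro x hx
          constructor
          · linarith [hx.2, min_le_right (T-d) (t+s+d)]
          · linarith [hx.1, hs.2]
        have hcg2 : ContinuousOn (fun x => g₂ x 0) (Icc t (min (T-d) (t+s+d))) :=
          cg2 (fun _ => 0) continuous_const _ _ hsub (fun x _ => h0J)
        have hcg3 : ContinuousOn (fun x => g₃ x (t+s-x) 0) (Icc t (min (T-d) (t+s+d))) :=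
          cg3 (fun x => t+s-x) (fun _ => 0) (continuous_const.sub continuous_id) continuous_const _ _ hsub
            hmem3 (fun x _ => h0J)
        have hcF : ContinuousOn FF (Icc t (min (T-d) (t+s+d))) := cF _ _ hmT
        have hi1 : IntervalIntegrable (fun x => g₂ x 0 * g₃ x (t+s-x) 0) volume t
            (min (T-d) (t+s+d)) := by
          apply ContinuousOn.intervalIntegrable
          rw [uIcc_of_le htm]; exact hcg2.mul hcg3
        have hi2 : IntervalIntegrable (fun x => (b * FF x) * (b^2 * FF x)) volume t
            (min (T-d) (t+s+d)) := by
          apply ContinuousOn.intervalIntegrable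
          rw [uIcc_of_le htm]
          exact (continuousOn_const.mul hcF).mul (continuousOn_const.mul hcF)
        have e2g := (hsol t ht s hs s hs).2.1
        have e2f := eq2F (b := b) (d := d) (T := T) hσ htT hmT
        rw [← hFFdef] at e2f
        have d2eq : g₂ t s - b * FF t
            = b * (g₁ (min (T-d) (t+s+d)) - FF (min (T-d) (t+s+d)))
              - (σ^2)⁻¹ * ∫ x in t..(min (T-d) (t+s+d)),
                  (g₂ x 0 * g₃ x (t+s-x) 0 - (b * FF x) * (b^2 * FF x)) := by
          rw [intervalIntegral.integral_sub hi1 hi2, e2g, e2f]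
          ring
        have hb : ∀ x ∈ Icc t (min (T-d) (t+s+d)),
            |g₂ x 0 * g₃ x (t+s-x) 0 - (b * FF x) * (b^2 * FF x)|
              ≤ 2*A*lam^2*B*C^n/(Nat.factorial n : ℝ) * (T - d - x) ^ n := by
          intro x hx
          have hxI := hsub hx
          have hxT : x ≤ T - d := le_trans hx.2 hmT
          have hM0 : 0 ≤ B*C^n*(T-d-x)^n/(Nat.factorial n : ℝ) :=
            div_nonneg (mul_nonneg (mul_nonneg hB0 (pow_nonneg hC0 n))
              (pow_nonneg (by linarith : (0:ℝ) ≤ T - d - x) n)) hfp.le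
          have e1 := ih2 x hxI 0 h0J
          have e2 := ih3 x hxI (t+s-x) (hmem3 x hx) 0 h0J
          have eA1 := hAg2 x hxI 0 h0J
          have eA2 := hAf3 x hxI
          have heq : g₂ x 0 * g₃ x (t+s-x) 0 - (b * FF x) * (b^2 * FF x)
              = g₂ x 0 * (g₃ x (t+s-x) 0 - b^2 * FF x)
                + (g₂ x 0 - b * FF x) * (b^2 * FF x) := by ring
          rw [heq]
          calc |g₂ x 0 * (g₃ x (t+s-x) 0 - b^2 * FF x)
                + (g₂ x 0 - b * FF x) * (b^2 * FF x)|
              ≤ |g₂ x 0 * (g₃ x (t+s-x) 0 - b^2 * FF x)|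
                + |(g₂ x 0 - b * FF x) * (b^2 * FF x)| := abs_add_le _ _
            _ = |g₂ x 0| * |g₃ x (t+s-x) 0 - b^2 * FF x|
                + |g₂ x 0 - b * FF x| * |b^2 * FF x| := by rw [abs_mul, abs_mul]
            _ ≤ A * (lam^2 * (B*C^n*(T-d-x)^n/(Nat.factorial n : ℝ)))
                + lam * (B*C^n*(T-d-x)^n/(Nat.factorial n : ℝ)) * A :=
                add_le_add (mul_le_mul eA1 e2 (abs_nonneg _) hA0)
                  (mul_le_mul e1 eA2 (abs_nonneg _) (mul_nonneg hlam0.le hM0))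
            _ ≤ 2*A*lam^2*B*C^n/(Nat.factorial n : ℝ) * (T - d - x) ^ n := by
                have hfact := mul_nonneg (mul_nonneg hA0 hM0)
                  (mul_nonneg hlam0.le (by linarith : (0:ℝ) ≤ lam - 1))
                have e5 : 2*A*lam^2*B*C^n/(Nat.factorial n : ℝ) * (T - d - x) ^ n
                    = A * (lam^2 * (B*C^n*(T-d-x)^n/(Nat.factorial n : ℝ)))
                      + lam * (B*C^n*(T-d-x)^n/(Nat.factorial n : ℝ)) * A
                      + (A * (B*C^n*(T-d-x)^n/(Nat.factorial n : ℝ)) * (lam * (lam - 1))) := by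
                  ring
                linarith [hfact]
        have habs := int_abs_le
          (fun x => g₂ x 0 * g₃ x (t+s-x) 0 - (b * FF x) * (b^2 * FF x))
          t (min (T-d) (t+s+d)) (T-d) (2*A*lam^2*B*C^n/(Nat.factorial n : ℝ)) n htm hmT
          ((hcg2.mul hcg3).sub ((continuousOn_const.mul hcF).mul (continuousOn_const.mul hcF)))
          hK0 hb
        have hR0 : 0 ≤ B * C ^ (n+1) * (T - d - t) ^ (n+1) / (Nat.factorial (n+1) : ℝ) := by
          apply div_nonneg _ (Nat.cast_nonneg _)
          exact mul_nonneg (mul_nonneg hB0 (pow_nonneg hC0 _))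
            (pow_nonneg (by linarith : (0:ℝ) ≤ T - d - t) _)
        have hDm : |g₁ (min (T-d) (t+s+d)) - FF (min (T-d) (t+s+d))|
            ≤ B * C ^ (n+1) * (T - d - t) ^ (n+1) / (Nat.factorial (n+1) : ℝ) := by
          refine (h1 _ hmI).trans ?_
          have hfacpos : (0:ℝ) < (Nat.factorial (n+1) : ℝ) := by
            exact_mod_cast Nat.factorial_pos (n+1)
          apply (div_le_div_iff_of_pos_right hfacpos).mpr
          exact mul_le_mul_of_nonneg_left
            (pow_le_pow_left₀ (by linarith [hmT]) (by linarith [htm]) _)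
            (mul_nonneg hB0 (pow_nonneg hC0 _))
        have hkey := keyIneq ((T-d-t)^(n+1)) (pow_nonneg (by linarith : (0:ℝ) ≤ T-d-t) _)
        have hlb : lam * (B * C ^ (n+1) * (T - d - t) ^ (n+1) / (Nat.factorial (n+1) : ℝ))
            = |b| * (B * C ^ (n+1) * (T - d - t) ^ (n+1) / (Nat.factorial (n+1) : ℝ))
              + B * C ^ (n+1) * (T - d - t) ^ (n+1) / (Nat.factorial (n+1) : ℝ) := by
          rw [hlamdef]; ring
        rw [d2eq]
        calc |b * (g₁ (min (T-d) (t+s+d)) - FF (min (T-d) (t+s+d)))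
              - (σ^2)⁻¹ * ∫ x in t..(min (T-d) (t+s+d)),
                  (g₂ x 0 * g₃ x (t+s-x) 0 - (b * FF x) * (b^2 * FF x))|
            ≤ |b * (g₁ (min (T-d) (t+s+d)) - FF (min (T-d) (t+s+d)))|
              + |(σ^2)⁻¹ * ∫ x in t..(min (T-d) (t+s+d)),
                  (g₂ x 0 * g₃ x (t+s-x) 0 - (b * FF x) * (b^2 * FF x))| := by
              rw [sub_eq_add_neg]
              exact (abs_add_le _ _).trans (by rw [abs_neg])
          _ = |b| * |g₁ (min (T-d) (t+s+d)) - FF (min (T-d) (t+s+d))|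
              + (σ^2)⁻¹ * |∫ x in t..(min (T-d) (t+s+d)),
                  (g₂ x 0 * g₃ x (t+s-x) 0 - (b * FF x) * (b^2 * FF x))| := by
              rw [abs_mul, abs_mul, abs_of_nonneg (by positivity : (0:ℝ) ≤ (σ^2)⁻¹)]
          _ ≤ |b| * (B * C ^ (n+1) * (T - d - t) ^ (n+1) / (Nat.factorial (n+1) : ℝ))
              + (σ^2)⁻¹ * (2*A*lam^2*B*C^n/(Nat.factorial n : ℝ) * (T-d-t)^(n+1) / ((n:ℝ)+1)) := by
              refine add_le_add (mul_le_mul_of_nonneg_left hDm (abs_nonneg b)) ?_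
              apply mul_le_mul_of_nonneg_left _ (by positivity)
              convert habs using 2
          _ ≤ lam * (B * C ^ (n+1) * (T - d - t) ^ (n+1) / (Nat.factorial (n+1) : ℝ)) := by
              linarith [hkey]
      -- step for the third component
      have h3 : ∀ t ∈ I, ∀ s ∈ J, ∀ r ∈ J, |g₃ t s r - b ^ 2 * FF t|
          ≤ lam ^ 2 * (B * C ^ (n+1) * (T - d - t) ^ (n+1) / (Nat.factorial (n+1) : ℝ)) := by
        intro t ht s hs r hr
        have htT : t ≤ T - d := ht.2
        have hminsr : -d ≤ min s r := le_min hs.1 hr.1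
        have htm : t ≤ min (T-d) (t + min s r + d) := le_min htT (by linarith)
        have hmT : min (T-d) (t + min s r + d) ≤ T - d := min_le_left _ _
        have hmI : min (T-d) (t + min s r + d) ∈ I := ⟨le_trans ht.1 htm, hmT⟩
        have hsub : Icc t (min (T-d) (t + min s r + d)) ⊆ I :=
          fun x hx => ⟨le_trans ht.1 hx.1, le_trans hx.2 hmT⟩
        have hmem3s : ∀ x ∈ Icc t (min (T-d) (t + min s r + d)), t + s - x ∈ J := by
          intro x hx
          constructor
          · linarith [hx.2, min_le_right (T-d) (t + min s r + d), min_le_left s r]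
          · linarith [hx.1, hs.2]
        have hmem3r : ∀ x ∈ Icc t (min (T-d) (t + min s r + d)), t + r - x ∈ J := by
          intro x hx
          constructor
          · linarith [hx.2, min_le_right (T-d) (t + min s r + d), min_le_right s r]
          · linarith [hx.1, hr.2]
        have hsr : |s - r| - d ∈ J := by
          have habs : |s - r| ≤ d := abs_le.mpr ⟨by linarith [hs.1, hr.2], by linarith [hs.2, hr.1]⟩
          exact ⟨by linarith [abs_nonneg (s-r)], by linarith⟩
        have hcs : ContinuousOn (fun x => g₃ x (t+s-x) 0) (Icc t (min (T-d) (t + min s r + d))) :=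
          cg3 (fun x => t+s-x) (fun _ => 0) (continuous_const.sub continuous_id) continuous_const _ _ hsub
            hmem3s (fun x _ => h0J)
        have hcr : ContinuousOn (fun x => g₃ x 0 (t+r-x)) (Icc t (min (T-d) (t + min s r + d))) :=
          cg3 (fun _ => 0) (fun x => t+r-x) continuous_const (continuous_const.sub continuous_id) _ _ hsub
            (fun x _ => h0J) hmem3r
        have hcF : ContinuousOn FF (Icc t (min (T-d) (t + min s r + d))) := cF _ _ hmT
        have hi1 : IntervalIntegrable (fun x => g₃ x (t+s-x) 0 * g₃ x 0 (t+r-x)) volume t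
            (min (T-d) (t + min s r + d)) := by
          apply ContinuousOn.intervalIntegrable
          rw [uIcc_of_le htm]; exact hcs.mul hcr
        have hi2 : IntervalIntegrable (fun x => (b^2 * FF x) * (b^2 * FF x)) volume t
            (min (T-d) (t + min s r + d)) := by
          apply ContinuousOn.intervalIntegrable
          rw [uIcc_of_le htm]
          exact (continuousOn_const.mul hcF).mul (continuousOn_const.mul hcF)
        have e3g := (hsol t ht s hs r hr).2.2
        have e3f := eq3F (b := b) (d := d) (T := T) hσ htT hmT
        rw [← hFFdef] at e3f
        have d3eq : g₃ t s r - b^2 * FF t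
            = b * (g₂ (min (T-d) (t + min s r + d)) (|s - r| - d)
                - b * FF (min (T-d) (t + min s r + d)))
              - (σ^2)⁻¹ * ∫ x in t..(min (T-d) (t + min s r + d)),
                  (g₃ x (t+s-x) 0 * g₃ x 0 (t+r-x) - (b^2 * FF x) * (b^2 * FF x)) := by
          rw [intervalIntegral.integral_sub hi1 hi2, e3g, e3f]
          ring
        have hb : ∀ x ∈ Icc t (min (T-d) (t + min s r + d)),
            |g₃ x (t+s-x) 0 * g₃ x 0 (t+r-x) - (b^2 * FF x) * (b^2 * FF x)|
              ≤ 2*A*lam^2*B*C^n/(Nat.factorial n : ℝ) * (T - d - x) ^ n := by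
          intro x hx
          have hxI := hsub hx
          have hxT : x ≤ T - d := le_trans hx.2 hmT
          have hM0 : 0 ≤ B*C^n*(T-d-x)^n/(Nat.factorial n : ℝ) :=
            div_nonneg (mul_nonneg (mul_nonneg hB0 (pow_nonneg hC0 n))
              (pow_nonneg (by linarith : (0:ℝ) ≤ T - d - x) n)) hfp.le
          have e1 := ih3 x hxI (t+s-x) (hmem3s x hx) 0 h0J
          have e2 := ih3 x hxI 0 h0J (t+r-x) (hmem3r x hx)
          have eA1 := hAg3 x hxI (t+s-x) (hmem3s x hx) 0 h0J
          have eA2 := hAf3 x hxI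
          have heq : g₃ x (t+s-x) 0 * g₃ x 0 (t+r-x) - (b^2 * FF x) * (b^2 * FF x)
              = g₃ x (t+s-x) 0 * (g₃ x 0 (t+r-x) - b^2 * FF x)
                + (g₃ x (t+s-x) 0 - b^2 * FF x) * (b^2 * FF x) := by ring
          rw [heq]
          calc |g₃ x (t+s-x) 0 * (g₃ x 0 (t+r-x) - b^2 * FF x)
                + (g₃ x (t+s-x) 0 - b^2 * FF x) * (b^2 * FF x)|
              ≤ |g₃ x (t+s-x) 0 * (g₃ x 0 (t+r-x) - b^2 * FF x)|
                + |(g₃ x (t+s-x) 0 - b^2 * FF x) * (b^2 * FF x)| := abs_add_le _ _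
            _ = |g₃ x (t+s-x) 0| * |g₃ x 0 (t+r-x) - b^2 * FF x|
                + |g₃ x (t+s-x) 0 - b^2 * FF x| * |b^2 * FF x| := by rw [abs_mul, abs_mul]
            _ ≤ A * (lam^2 * (B*C^n*(T-d-x)^n/(Nat.factorial n : ℝ)))
                + lam^2 * (B*C^n*(T-d-x)^n/(Nat.factorial n : ℝ)) * A :=
                add_le_add (mul_le_mul eA1 e2 (abs_nonneg _) hA0)
                  (mul_le_mul e1 eA2 (abs_nonneg _)
                    (mul_nonneg (sq_nonneg lam) hM0))
            _ ≤ 2*A*lam^2*B*C^n/(Nat.factorial n : ℝ) * (T - d - x) ^ n := by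
                have e5 : 2*A*lam^2*B*C^n/(Nat.factorial n : ℝ) * (T - d - x) ^ n
                    = A * (lam^2 * (B*C^n*(T-d-x)^n/(Nat.factorial n : ℝ)))
                      + lam^2 * (B*C^n*(T-d-x)^n/(Nat.factorial n : ℝ)) * A := by ring
                linarith
        have habs := int_abs_le
          (fun x => g₃ x (t+s-x) 0 * g₃ x 0 (t+r-x) - (b^2 * FF x) * (b^2 * FF x))
          t (min (T-d) (t + min s r + d)) (T-d) (2*A*lam^2*B*C^n/(Nat.factorial n : ℝ)) n htm hmT
          ((hcs.mul hcr).sub ((continuousOn_const.mul hcF).mul (continuousOn_const.mul hcF)))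
          hK0 hb
        have hR0 : 0 ≤ B * C ^ (n+1) * (T - d - t) ^ (n+1) / (Nat.factorial (n+1) : ℝ) := by
          apply div_nonneg _ (Nat.cast_nonneg _)
          exact mul_nonneg (mul_nonneg hB0 (pow_nonneg hC0 _))
            (pow_nonneg (by linarith : (0:ℝ) ≤ T - d - t) _)
        have hDm : |g₂ (min (T-d) (t + min s r + d)) (|s - r| - d)
              - b * FF (min (T-d) (t + min s r + d))|
            ≤ lam * (B * C ^ (n+1) * (T - d - t) ^ (n+1) / (Nat.factorial (n+1) : ℝ)) := by
          refine (h2 _ hmI (|s - r| - d) hsr).trans ?_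
          apply mul_le_mul_of_nonneg_left _ hlam0.le
          have hfacpos : (0:ℝ) < (Nat.factorial (n+1) : ℝ) := by
            exact_mod_cast Nat.factorial_pos (n+1)
          apply (div_le_div_iff_of_pos_right hfacpos).mpr
          exact mul_le_mul_of_nonneg_left
            (pow_le_pow_left₀ (by linarith [hmT]) (by linarith [htm]) _)
            (mul_nonneg hB0 (pow_nonneg hC0 _))
        have hkey := keyIneq ((T-d-t)^(n+1)) (pow_nonneg (by linarith : (0:ℝ) ≤ T-d-t) _)
        have hlb : lam^2 * (B * C ^ (n+1) * (T - d - t) ^ (n+1) / (Nat.factorial (n+1) : ℝ))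
            = |b| * (lam * (B * C ^ (n+1) * (T - d - t) ^ (n+1) / (Nat.factorial (n+1) : ℝ)))
              + lam * (B * C ^ (n+1) * (T - d - t) ^ (n+1) / (Nat.factorial (n+1) : ℝ)) := by
          rw [hlamdef]; ring
        have hRlam : B * C ^ (n+1) * (T - d - t) ^ (n+1) / (Nat.factorial (n+1) : ℝ)
            ≤ lam * (B * C ^ (n+1) * (T - d - t) ^ (n+1) / (Nat.factorial (n+1) : ℝ)) :=
          le_mul_of_one_le_left hR0 hlam1
        rw [d3eq]
        calc |b * (g₂ (min (T-d) (t + min s r + d)) (|s - r| - d)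
                - b * FF (min (T-d) (t + min s r + d)))
              - (σ^2)⁻¹ * ∫ x in t..(min (T-d) (t + min s r + d)),
                  (g₃ x (t+s-x) 0 * g₃ x 0 (t+r-x) - (b^2 * FF x) * (b^2 * FF x))|
            ≤ |b * (g₂ (min (T-d) (t + min s r + d)) (|s - r| - d)
                - b * FF (min (T-d) (t + min s r + d)))|
              + |(σ^2)⁻¹ * ∫ x in t..(min (T-d) (t + min s r + d)),
                  (g₃ x (t+s-x) 0 * g₃ x 0 (t+r-x) - (b^2 * FF x) * (b^2 * FF x))| := by
              rw [sub_eq_add_neg]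
              exact (abs_add_le _ _).trans (by rw [abs_neg])
          _ = |b| * |g₂ (min (T-d) (t + min s r + d)) (|s - r| - d)
                - b * FF (min (T-d) (t + min s r + d))|
              + (σ^2)⁻¹ * |∫ x in t..(min (T-d) (t + min s r + d)),
                  (g₃ x (t+s-x) 0 * g₃ x 0 (t+r-x) - (b^2 * FF x) * (b^2 * FF x))| := by
              rw [abs_mul, abs_mul, abs_of_nonneg (by positivity : (0:ℝ) ≤ (σ^2)⁻¹)]
          _ ≤ |b| * (lam * (B * C ^ (n+1) * (T - d - t) ^ (n+1) / (Nat.factorial (n+1) : ℝ)))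
              + (σ^2)⁻¹ * (2*A*lam^2*B*C^n/(Nat.factorial n : ℝ) * (T-d-t)^(n+1) / ((n:ℝ)+1)) := by
              refine add_le_add (mul_le_mul_of_nonneg_left hDm (abs_nonneg b)) ?_
              apply mul_le_mul_of_nonneg_left _ (by positivity)
              convert habs using 2
          _ ≤ lam^2 * (B * C ^ (n+1) * (T - d - t) ^ (n+1) / (Nat.factorial (n+1) : ℝ)) := by
              linarith [hkey]
      exact ⟨h1, h2, h3⟩
  -- conclusion via tendsto
  have hlim : ∀ t ∈ I, Filter.Tendsto
      (fun n : ℕ => B * C ^ n * (T-d-t)^n / (Nat.factorial n : ℝ))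
      Filter.atTop (nhds 0) := by
    intro t ht
    have h0 := FloorSemiring.tendsto_pow_div_factorial_atTop (K := ℝ) (C * (T-d-t))
    have h1 := Filter.Tendsto.const_mul B h0
    rw [mul_zero] at h1
    refine h1.congr fun n => ?_
    rw [mul_pow]; ring
  refine ⟨fun t ht => ?_, fun t ht s hs => ?_, fun t ht s hs r hr => ?_⟩
  · have hle : |g₁ t - FF t| ≤ 0 :=
      ge_of_tendsto' (hlim t ht) (fun n => (main n).1 t ht)
    exact sub_eq_zero.mp (abs_nonpos_iff.mp hle)
  · have hten := Filter.Tendsto.const_mul lam (hlim t ht)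
    rw [mul_zero] at hten
    have hle : |g₂ t s - b * FF t| ≤ 0 :=
      ge_of_tendsto' hten (fun n => (main n).2.1 t ht s hs)
    exact sub_eq_zero.mp (abs_nonpos_iff.mp hle)
  · have hten := Filter.Tendsto.const_mul (lam^2) (hlim t ht)
    rw [mul_zero] at hten
    have hle : |g₃ t s r - b ^ 2 * FF t| ≤ 0 :=
      ge_of_tendsto' hten (fun n => (main n).2.2 t ht s hs r hr)
    exact sub_eq_zero.mp (abs_nonpos_iff.mp hle)



end Stmt6Aux

/-- If `1 - d (b/σ)² > 0`, the first-slice integral system on the full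
slice `[T-2d, T-d] × [-d,0]²` admits a unique continuous solution, and its first
component satisfies `0 < 1 - d (b/σ)² ≤ ξ₁ ≤ 1`. -/
theorem stmt_6 (b σ d T : ℝ) (hσ : σ ≠ 0) (hd : 0 < d) (hT : 2 * d ≤ T)
    (hpos : 0 < 1 - d * (b / σ) ^ 2) :
    ∃ (ξ₁ : ℝ → ℝ) (ξ₂ : ℝ → ℝ → ℝ) (ξ₃ : ℝ → ℝ → ℝ → ℝ),
      isContTriple T d ξ₁ ξ₂ ξ₃ ∧ isSolutionSlice b σ T d ξ₁ ξ₂ ξ₃ ∧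
      (∀ t ∈ Icc (T - 2 * d) (T - d), 1 - d * (b / σ) ^ 2 ≤ ξ₁ t ∧ ξ₁ t ≤ 1) ∧
      ∀ (ξ₁' : ℝ → ℝ) (ξ₂' : ℝ → ℝ → ℝ) (ξ₃' : ℝ → ℝ → ℝ → ℝ),
        isContTriple T d ξ₁' ξ₂' ξ₃' → isSolutionSlice b σ T d ξ₁' ξ₂' ξ₃' →
          (∀ t ∈ Icc (T - 2 * d) (T - d), ξ₁' t = ξ₁ t) ∧
          (∀ t ∈ Icc (T - 2 * d) (T - d), ∀ s ∈ Icc (-d) 0, ξ₂' t s = ξ₂ t s) ∧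
          (∀ t ∈ Icc (T - 2 * d) (T - d), ∀ s ∈ Icc (-d) 0, ∀ r ∈ Icc (-d) 0,
            ξ₃' t s r = ξ₃ t s r) := by
  refine ⟨Stmt6Aux.F b σ d T, fun t _ => b * Stmt6Aux.F b σ d T t,
    fun t _ _ => b ^ 2 * Stmt6Aux.F b σ d T t, ?_, ?_, ?_, ?_⟩
  · -- continuity
    have hFI : ContinuousOn (Stmt6Aux.F b σ d T) (Icc (T - 2 * d) (T - d)) :=
      Stmt6Aux.F_cont.mono (fun x hx => hx.2)
    refine ⟨hFI, ?_, ?_⟩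
    · exact continuousOn_const.mul
        (hFI.comp continuous_fst.continuousOn (fun p hp => hp.1))
    · exact continuousOn_const.mul
        (hFI.comp continuous_fst.continuousOn (fun p hp => hp.1))
  · -- solution
    intro t ht s hs r hr
    refine ⟨Stmt6Aux.eq1F hσ ht.2, Stmt6Aux.eq2F hσ ht.2 (min_le_left _ _),
      Stmt6Aux.eq3F hσ ht.2 (min_le_left _ _)⟩
  · -- bounds
    intro t ht
    have h0 := Stmt6Aux.den_pos (b := b) (σ := σ) ht.2
    constructor
    · have h2 : 1 + (b/σ)^2 * (T - d - t) ≤ 1 + (b/σ)^2 * d := by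
        nlinarith [sq_nonneg (b/σ), ht.1]
      have h3 : (0:ℝ) < 1 + (b/σ)^2 * d := by nlinarith [sq_nonneg (b/σ)]
      have h4 : (1 + (b/σ)^2 * d)⁻¹ ≤ (1 + (b/σ)^2 * (T - d - t))⁻¹ := inv_anti₀ h0 h2
      have h5 : 1 - d * (b/σ)^2 ≤ (1 + (b/σ)^2 * d)⁻¹ := by
        rw [← one_div, le_div_iff₀ h3]
        nlinarith [sq_nonneg ((b/σ)^2 * d)]
      exact h5.trans h4
    · exact (Stmt6Aux.F_bounds ht.1 ht.2).2
  · -- uniqueness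
    intro g₁ g₂ g₃ hct hsol
    exact Stmt6Aux.uniq hσ hd hT g₁ g₂ g₃ hct hsol
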